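/- (Khinchin inequality, i.i.d. case) For any i.i.d. source with entropy H over a finite alphabet and any one-to-one code sequence γ, liminf_n (1/n) Σ_{x ∈ X^n} ||γ(x)|| · p(x) ≥ H. -/

import Mathlib

open Filter ENNReal

lemma kh_mul_log_mul (a b : ℝ) :
    (a * b) * Real.log (a * b) = a * (b * Real.log b) + b * (a * Real.log a) := by
  rcases eq_or_ne a 0 with rfl | ha
  · simp
  rcases eq_or_ne b 0 with rfl | hb
  · simp
  rw [Real.log_mul ha hb]; ring

lemma kh_sum_prod_one {α : Type*} [Fintype α] (p : α → ℝ) (hp1 : ∑ a, p a = 1) (n : ℕ) :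
    ∑ x : Fin n → α, ∏ i, p (x i) = 1 := by
  classical
  have h := Finset.prod_univ_sum (ι := Fin n) (fun _ => (Finset.univ : Finset α)) (fun _ a => p a)
  rw [Fintype.piFinset_univ] at h
  rw [← h]
  simp [hp1]

lemma kh_ent_add {α : Type*} [Fintype α] (p : α → ℝ) (hp1 : ∑ a, p a = 1) (n : ℕ) :
    ∑ x : Fin n → α, (∏ i, p (x i)) * Real.log (∏ i, p (x i))
      = n * ∑ a, p a * Real.log (p a) := by
  classical
  induction n with
  | zero => simp
  | succ n ih =>
    have he := Equiv.sum_comp (Fin.consEquiv (fun _ : Fin (n+1) => α))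
      (fun x : Fin (n+1) → α => (∏ i, p (x i)) * Real.log (∏ i, p (x i)))
    rw [← he, Fintype.sum_prod_type]
    have : ∀ (a : α) (y : Fin n → α),
        (∏ i, p ((Fin.consEquiv (fun _ : Fin (n+1) => α)) (a, y) i))
          = p a * ∏ i, p (y i) := by
      intro a y
      rw [Fin.prod_univ_succ]
      simp [Fin.consEquiv]
    simp only [this]
    simp only [kh_mul_log_mul]
    rw [Finset.sum_congr rfl (fun a _ => Finset.sum_add_distrib)]
    simp only [← Finset.mul_sum, ← Finset.sum_mul]
    rw [Finset.sum_add_distrib, ← Finset.sum_mul, ← Finset.mul_sum]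
    rw [hp1, kh_sum_prod_one p hp1 n, ih]
    push_cast
    ring

lemma kh_card_len_le {β : Type*} [Fintype β] [DecidableEq β] (f : β → List Bool)
    (hf : Function.Injective f) (ℓ : ℕ) :
    (Finset.univ.filter (fun x => (f x).length = ℓ)).card ≤ 2 ^ ℓ := by
  classical
  have : (Finset.univ.filter (fun x => (f x).length = ℓ)).card
      ≤ (Finset.univ : Finset (Fin ℓ → Bool)).card := by
    apply Finset.card_le_card_of_injOn
      (fun x => fun i : Fin ℓ => (f x).getD i false)
    · intro x _; exact Finset.mem_univ _
    · intro x hx y hy hxy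
      have hx' : (f x).length = ℓ := by simpa using (Finset.mem_filter.1 hx).2
      have hy' : (f y).length = ℓ := by simpa using (Finset.mem_filter.1 hy).2
      apply hf
      apply List.ext_getElem (hx'.trans hy'.symm)
      intro i h1 h2
      have := congrFun hxy ⟨i, by omega⟩
      simp only at this
      rwa [List.getD_eq_getElem _ _ h1, List.getD_eq_getElem _ _ h2] at this
  simpa using this

lemma kh_kraft {β : Type*} [Fintype β] (f : β → List Bool) (hf : Function.Injective f) :
    ∑ x : β, ((2:ℝ) ^ ((f x).length : ℤ))⁻¹ ≤ (Nat.log 2 (Fintype.card β) : ℝ) + 2 := by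
  classical
  set N := Fintype.card β with hN
  set m := Nat.log 2 N with hm
  have hsplit := Finset.sum_filter_add_sum_filter_not (Finset.univ : Finset β)
    (fun x => (f x).length ≤ m) (fun x => ((2:ℝ) ^ ((f x).length : ℤ))⁻¹)
  rw [← hsplit]
  have h1 : ∑ x ∈ Finset.univ.filter (fun x => (f x).length ≤ m),
      ((2:ℝ) ^ ((f x).length : ℤ))⁻¹ ≤ (m : ℝ) + 1 := by
    rw [← Finset.sum_fiberwise_of_maps_to (g := fun x => (f x).length)
      (t := Finset.range (m+1)) (by intro x hx; simp at hx ⊢; omega)]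
    calc ∑ ℓ ∈ Finset.range (m+1), ∑ x ∈ (Finset.univ.filter
            (fun x => (f x).length ≤ m)).filter (fun x => (f x).length = ℓ),
            ((2:ℝ) ^ ((f x).length : ℤ))⁻¹
        ≤ ∑ ℓ ∈ Finset.range (m+1), (1:ℝ) := by
          apply Finset.sum_le_sum
          intro ℓ _
          have hsub : (Finset.univ.filter (fun x => (f x).length ≤ m)).filter
              (fun x => (f x).length = ℓ) ⊆ Finset.univ.filter (fun x => (f x).length = ℓ) := by
            intro x hx; simp at hx ⊢; exact hx.2
          calc ∑ x ∈ (Finset.univ.filter (fun x => (f x).length ≤ m)).filter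
                  (fun x => (f x).length = ℓ), ((2:ℝ) ^ ((f x).length : ℤ))⁻¹
              ≤ ∑ x ∈ Finset.univ.filter (fun x => (f x).length = ℓ),
                  ((2:ℝ) ^ ((f x).length : ℤ))⁻¹ := by
                apply Finset.sum_le_sum_of_subset_of_nonneg hsub
                intro x _ _; positivity
            _ = (Finset.univ.filter (fun x => (f x).length = ℓ)).card * ((2:ℝ) ^ (ℓ : ℤ))⁻¹ := by
                rw [Finset.sum_congr rfl (fun x hx => by
                  simp only [Finset.mem_filter] at hx; rw [hx.2])]
                rw [Finset.sum_const, nsmul_eq_mul]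
            _ ≤ (2:ℝ) ^ ℓ * ((2:ℝ) ^ (ℓ : ℤ))⁻¹ := by
                apply mul_le_mul_of_nonneg_right _ (by positivity)
                calc ((Finset.univ.filter (fun x => (f x).length = ℓ)).card : ℝ)
                    ≤ ((2^ℓ : ℕ) : ℝ) := by exact_mod_cast kh_card_len_le f hf ℓ
                  _ = (2:ℝ) ^ ℓ := by push_cast; ring
            _ = 1 := by
                rw [zpow_natCast]
                field_simp
      _ = (m : ℝ) + 1 := by simp
  have h2 : ∑ x ∈ Finset.univ.filter (fun x => ¬ (f x).length ≤ m),
      ((2:ℝ) ^ ((f x).length : ℤ))⁻¹ ≤ 1 := by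
    have hterm : ∀ x ∈ Finset.univ.filter (fun x => ¬ (f x).length ≤ m),
        ((2:ℝ) ^ ((f x).length : ℤ))⁻¹ ≤ ((2:ℝ) ^ ((m+1 : ℕ) : ℤ))⁻¹ := by
      intro x hx
      simp only [Finset.mem_filter, not_le] at hx
      apply inv_anti₀ (by positivity)
      apply zpow_le_zpow_right₀ one_le_two
      exact_mod_cast hx.2
    calc ∑ x ∈ Finset.univ.filter (fun x => ¬ (f x).length ≤ m),
          ((2:ℝ) ^ ((f x).length : ℤ))⁻¹
        ≤ ∑ _x ∈ Finset.univ.filter (fun x => ¬ (f x).length ≤ m),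
          ((2:ℝ) ^ ((m+1 : ℕ) : ℤ))⁻¹ := Finset.sum_le_sum hterm
      _ = (Finset.univ.filter (fun x => ¬ (f x).length ≤ m)).card
            * ((2:ℝ) ^ ((m+1 : ℕ) : ℤ))⁻¹ := by rw [Finset.sum_const, nsmul_eq_mul]
      _ ≤ (N : ℝ) * ((2:ℝ) ^ ((m+1 : ℕ) : ℤ))⁻¹ := by
          apply mul_le_mul_of_nonneg_right _ (by positivity)
          exact_mod_cast Finset.card_filter_le _ _
      _ ≤ 1 := by
          rw [zpow_natCast]
          rw [mul_inv_le_iff₀ (by positivity), one_mul]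
          have := Nat.lt_pow_succ_log_self (b := 2) one_lt_two N
          exact_mod_cast this.le
  linarith

lemma kh_gibbs {α : Type*} [Fintype α] [Nonempty α] (p : α → ℝ) (hp0 : ∀ a, 0 ≤ p a)
    (hp1 : ∑ a, p a = 1) (n : ℕ) (f : (Fin n → α) → List Bool) :
    (n : ℝ) * (-∑ a, p a * Real.log (p a))
      - Real.log (∑ x : Fin n → α, ((2:ℝ) ^ ((f x).length : ℤ))⁻¹)
    ≤ Real.log 2 * ∑ x : Fin n → α, ((f x).length : ℝ) * ∏ i, p (x i) := by
  classical
  set P : (Fin n → α) → ℝ := fun x => ∏ i, p (x i) with hP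
  set q : (Fin n → α) → ℝ := fun x => ((2:ℝ) ^ ((f x).length : ℤ))⁻¹ with hq
  set C : ℝ := ∑ x : Fin n → α, q x with hCdef
  have hPnn : ∀ x, 0 ≤ P x := fun x => Finset.prod_nonneg fun i _ => hp0 _
  have hqpos : ∀ x, 0 < q x := fun x => by positivity
  have hC : 0 < C := Finset.sum_pos (fun x _ => hqpos x) Finset.univ_nonempty
  set T := Finset.univ.filter (fun x : Fin n → α => 0 < P x) with hT
  have hPT : ∀ x, x ∉ T → P x = 0 := by
    intro x hx
    by_contra h
    exact hx (Finset.mem_filter.2 ⟨Finset.mem_univ _, lt_of_le_of_ne (hPnn x) (Ne.symm h)⟩)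
  have hsumPT : ∑ x ∈ T, P x = 1 := by
    rw [Finset.sum_filter_of_ne (fun x _ h => lt_of_le_of_ne (hPnn x) (Ne.symm h))]
    exact kh_sum_prod_one p hp1 n
  have key : ∀ x ∈ T, P x * Real.log (q x / C) - P x * Real.log (P x) ≤ q x / C - P x := by
    intro x hx
    have hPx : 0 < P x := (Finset.mem_filter.1 hx).2
    have h1 : Real.log (q x / C / P x) ≤ q x / C / P x - 1 :=
      Real.log_le_sub_one_of_pos (by positivity)
    rw [Real.log_div (by positivity) (ne_of_gt hPx)] at h1
    have h3 := mul_le_mul_of_nonneg_left h1 hPx.le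
    have h2 : P x * (q x / C / P x - 1) = q x / C - P x := by
      field_simp
    rw [h2, mul_sub] at h3
    linarith
  have hsum := Finset.sum_le_sum key
  rw [Finset.sum_sub_distrib] at hsum
  have e1 : ∑ x ∈ T, P x * Real.log (q x / C)
      = -(Real.log 2) * (∑ x ∈ T, ((f x).length : ℝ) * P x) - Real.log C := by
    have hterm : ∀ x ∈ T, P x * Real.log (q x / C)
        = -(Real.log 2) * (((f x).length : ℝ) * P x) - Real.log C * P x := by
      intro x _
      rw [Real.log_div (ne_of_gt (hqpos x)) (ne_of_gt hC)]
      show P x * (Real.log (((2:ℝ) ^ ((f x).length : ℤ))⁻¹) - Real.log C) = _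
      rw [Real.log_inv, Real.log_zpow]
      push_cast
      ring
    rw [Finset.sum_congr rfl hterm, Finset.sum_sub_distrib, ← Finset.mul_sum,
      ← Finset.mul_sum, hsumPT, mul_one]
  have e2 : ∑ x ∈ T, ((f x).length : ℝ) * P x = ∑ x : Fin n → α, ((f x).length : ℝ) * P x := by
    apply Finset.sum_filter_of_ne
    intro x _ h
    rcases eq_or_lt_of_le (hPnn x) with h0 | h0
    · exact absurd (by rw [← h0]; ring) h
    · exact h0
  have e3 : ∑ x ∈ T, P x * Real.log (P x) = (n : ℝ) * ∑ a, p a * Real.log (p a) := by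
    rw [Finset.sum_filter_of_ne (fun x _ h => by
      rcases eq_or_lt_of_le (hPnn x) with h0 | h0
      · exact absurd (by rw [← h0]; simp) h
      · exact h0)]
    exact kh_ent_add p hp1 n
  have e4 : ∑ x ∈ T, (q x / C - P x) ≤ 0 := by
    rw [Finset.sum_sub_distrib, hsumPT]
    have hq1 : ∑ x ∈ T, q x / C ≤ 1 := by
      rw [← Finset.sum_div, div_le_one hC]
      exact Finset.sum_le_sum_of_subset_of_nonneg (Finset.filter_subset _ _)
        (fun x _ _ => (hqpos x).le)
    linarith
  rw [e1, e2, e3] at hsum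
  linarith [le_trans hsum e4]

lemma kh_tendsto_g (B : ℕ) (hB : 1 ≤ B) :
    Tendsto (fun n : ℕ => Real.log ((n : ℝ) * B + 2) / (Real.log 2 * n)) atTop (nhds 0) := by
  have hto : Tendsto (fun n : ℕ => (n : ℝ) * B + 2) atTop atTop := by
    apply tendsto_atTop_add_const_right
    exact Tendsto.atTop_mul_const (by exact_mod_cast hB) tendsto_natCast_atTop_atTop
  have h1 : (fun n : ℕ => Real.log ((n : ℝ) * B + 2)) =o[atTop] (fun n : ℕ => (n : ℝ)) := by
    have hcomp := Real.isLittleO_log_id_atTop.comp_tendsto hto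
    refine hcomp.trans_isBigO ?_
    apply Asymptotics.IsBigO.of_bound ((B : ℝ) + 2)
    filter_upwards [eventually_ge_atTop 1] with n hn
    have hn1 : (1:ℝ) ≤ (n:ℝ) := by exact_mod_cast hn
    simp only [Function.comp, id]
    rw [Real.norm_eq_abs, Real.norm_eq_abs, abs_of_nonneg (by positivity),
      abs_of_nonneg (by positivity)]
    nlinarith
  have h2 := h1.tendsto_div_nhds_zero
  have h3 : Tendsto (fun n : ℕ => (Real.log 2)⁻¹ * (Real.log ((n : ℝ) * B + 2) / n))
      atTop (nhds ((Real.log 2)⁻¹ * 0)) := h2.const_mul _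
  rw [mul_zero] at h3
  refine h3.congr (fun n => by ring)


/-- Khinchin inequality (i.i.d. case): for an i.i.d. source with entropy `H`
and any one-to-one code sequence `γ`,
`liminf_n (1/n) ∑_{x ∈ X^n} ‖γ(x)‖ p(x) ≥ H`. -/
theorem khinchin_inequality_iid {α : Type*} [Fintype α]
    (p : α → ℝ) (hp0 : ∀ a, 0 ≤ p a) (hp1 : ∑ a, p a = 1)
    {H : ℝ} (hH : H = -∑ a, p a * Real.logb 2 (p a))
    (γ : ∀ n : ℕ, (Fin n → α) → List Bool) (hγ : ∀ n, Function.Injective (γ n)) :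
    ENNReal.ofReal H ≤
      atTop.liminf (fun n : ℕ =>
        (∑ x : Fin n → α,
          ((γ n x).length : ℝ≥0∞) * ENNReal.ofReal (∏ i, p (x i))) / (n : ℝ≥0∞)) := by
  classical
  have hα : Nonempty α := by
    by_contra h
    rw [not_nonempty_iff] at h
    simp [Finset.univ_eq_empty] at hp1
  have hL2 : (0:ℝ) < Real.log 2 := Real.log_pos one_lt_two
  -- real sequences
  set s : ℕ → ℝ := fun n => ∑ x : Fin n → α, ((γ n x).length : ℝ) * ∏ i, p (x i) with hs
  set B : ℕ := Nat.log 2 (Fintype.card α) + 1 with hB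
  set g : ℕ → ℝ := fun n => Real.log ((n : ℝ) * B + 2) / (Real.log 2 * n) with hg
  -- entropy in natural log
  have hHlog : -∑ a, p a * Real.log (p a) = H * Real.log 2 := by
    rw [hH, neg_mul, neg_inj, Finset.sum_mul]
    refine Finset.sum_congr rfl fun a _ => ?_
    rw [Real.logb]
    field_simp
  -- lower bound on s n / n
  have hlower : ∀ n : ℕ, 1 ≤ n → H - g n ≤ s n / n := by
    intro n hn
    have hnR : (0:ℝ) < (n:ℝ) := by exact_mod_cast hn
    have hgibbs := kh_gibbs p hp0 hp1 n (γ n)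
    rw [hHlog] at hgibbs
    set C : ℝ := ∑ x : Fin n → α, ((2:ℝ) ^ (((γ n) x).length : ℤ))⁻¹ with hC
    have hCpos : 0 < C := Finset.sum_pos (fun x _ => by positivity) Finset.univ_nonempty
    have hCb : C ≤ (n : ℝ) * B + 2 := by
      have hk := kh_kraft (γ n) (hγ n)
      have hcard : Fintype.card (Fin n → α) = Fintype.card α ^ n := by
        rw [Fintype.card_fun, Fintype.card_fin]
      have hnat : Nat.log 2 (Fintype.card (Fin n → α)) ≤ n * B := by
        rw [hcard]
        have h1 : Fintype.card α ^ n ≤ (2 ^ B) ^ n := by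
          apply Nat.pow_le_pow_left
          exact (Nat.lt_pow_succ_log_self one_lt_two _).le
        calc Nat.log 2 (Fintype.card α ^ n) ≤ Nat.log 2 ((2 ^ B) ^ n) :=
              Nat.log_mono_right h1
          _ = n * B := by rw [← pow_mul, Nat.log_pow one_lt_two, mul_comm]
      calc C ≤ (Nat.log 2 (Fintype.card (Fin n → α)) : ℝ) + 2 := hk
        _ ≤ (n : ℝ) * B + 2 := by
            have h2 : (Nat.log 2 (Fintype.card (Fin n → α)) : ℝ) ≤ ((n * B : ℕ) : ℝ) :=
              Nat.cast_le.2 hnat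
            rw [hB] at h2 ⊢
            push_cast at h2 ⊢
            linarith
    have hlogC : Real.log C ≤ Real.log ((n : ℝ) * B + 2) :=
      Real.log_le_log hCpos hCb
    have key : H * Real.log 2 * n - Real.log ((n : ℝ) * B + 2) ≤ Real.log 2 * s n := by
      have := hgibbs
      nlinarith
    calc H - g n = (H * Real.log 2 * n - Real.log ((n : ℝ) * B + 2)) / (Real.log 2 * n) := by
          rw [hg, eq_div_iff (ne_of_gt (by positivity : (0:ℝ) < Real.log 2 * (n:ℝ)))]
          field_simp
      _ ≤ (Real.log 2 * s n) / (Real.log 2 * n) := by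
          have hpos : (0:ℝ) < Real.log 2 * n := by positivity
          exact (div_le_div_iff_of_pos_right hpos).2 key
      _ = s n / n := by
          rw [mul_div_mul_left _ _ (ne_of_gt hL2)]
  have hFn : ∀ n : ℕ, 1 ≤ n →
      (∑ x : Fin n → α, ((γ n x).length : ℝ≥0∞) * ENNReal.ofReal (∏ i, p (x i))) / (n : ℝ≥0∞)
        = ENNReal.ofReal (s n / n) := by
    intro n hn
    have hnR : (0:ℝ) < (n:ℝ) := by exact_mod_cast hn
    have h1 : (∑ x : Fin n → α, ((γ n x).length : ℝ≥0∞) * ENNReal.ofReal (∏ i, p (x i)))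
        = ENNReal.ofReal (s n) := by
      rw [hs, ENNReal.ofReal_sum_of_nonneg (fun x _ =>
        mul_nonneg (Nat.cast_nonneg _) (Finset.prod_nonneg fun i _ => hp0 _))]
      refine Finset.sum_congr rfl fun x _ => ?_
      rw [ENNReal.ofReal_mul (Nat.cast_nonneg _), ENNReal.ofReal_natCast]
    rw [h1, ENNReal.ofReal_div_of_pos hnR, ENNReal.ofReal_natCast]
  have hg0 : Tendsto g atTop (nhds 0) := kh_tendsto_g B (by rw [hB]; omega)
  have hlim : Tendsto (fun n : ℕ => ENNReal.ofReal (H - g n)) atTop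
      (nhds (ENNReal.ofReal H)) := by
    have h2 : Tendsto (fun n : ℕ => H - g n) atTop (nhds H) := by
      simpa using tendsto_const_nhds.sub hg0
    exact (ENNReal.continuous_ofReal.tendsto H).comp h2
  rw [← hlim.liminf_eq]
  apply Filter.liminf_le_liminf ?_ ?_ ?_
  · filter_upwards [eventually_ge_atTop 1] with n hn
    rw [hFn n hn]
    exact ENNReal.ofReal_le_ofReal (hlower n hn)
  · isBoundedDefault
  · isBoundedDefault
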